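/- arXiv:1510.06173 — 4 statements merged into one kernel-verified Lean document; each statement's English description precedes it below -/
import Mathlib

section
/- Let u_0, ..., u_N = u_0 be points in ℝ² (indices mod N) with q_j := |u_j − u_{j-1}| > 0, τ_j := (u_j − u_{j-1})/q_j. If the points evolve in time by the ODE system u̇_j + (2/(q_j + q_{j+1}))(τ_j − τ_{j+1}) = r_j for given vectors r_j, then q̇_j = τ_j · (r_j − r_{j-1}) − |τ_{j+1} − τ_j|²/(q_j + q_{j+1}) − |τ_{j-1} − τ_j|²/(q_j + q_{j-1}). -/
open scoped RealInnerProductSpace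

/-- Discrete length-element identity (4.6): for a polygon with vertices `u_j` evolving by
`u̇_j + (2/(q_j+q_{j+1}))(τ_j - τ_{j+1}) = r_j`, the edge lengths satisfy
`q̇_j = τ_j·(r_j - r_{j-1}) - |τ_{j+1}-τ_j|²/(q_j+q_{j+1}) - |τ_{j-1}-τ_j|²/(q_j+q_{j-1})`. -/
theorem discrete_length_element_identity (N : ℕ) (hN : 0 < N)
    (u du r : ZMod N → ℝ → EuclideanSpace ℝ (Fin 2))
    (q : ZMod N → ℝ → ℝ) (τ : ZMod N → ℝ → EuclideanSpace ℝ (Fin 2))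
    (hq : ∀ j s, q j s = ‖u j s - u (j - 1) s‖)
    (hτ : ∀ j s, τ j s = (q j s)⁻¹ • (u j s - u (j - 1) s))
    (hqpos : ∀ j s, 0 < q j s)
    (hdu : ∀ j s, HasDerivAt (fun t' => u j t') (du j s) s)
    (hode : ∀ j s, du j s + (2 / (q j s + q (j + 1) s)) • (τ j s - τ (j + 1) s) = r j s)
    (t : ℝ) :
    ∀ j, HasDerivAt (fun t' => q j t')
      (⟪τ j t, r j t - r (j - 1) t⟫
        - ‖τ (j + 1) t - τ j t‖ ^ 2 / (q j t + q (j + 1) t)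
        - ‖τ (j - 1) t - τ j t‖ ^ 2 / (q j t + q (j - 1) t)) t := by
  intro j
  -- unit tangents
  have hτnorm : ∀ k s, ‖τ k s‖ = 1 := by
    intro k s
    rw [hτ, norm_smul, ← hq, Real.norm_eq_abs, abs_of_pos (inv_pos.mpr (hqpos k s)),
      inv_mul_cancel₀ (hqpos k s).ne']
  -- edge vector and its derivative
  set v : ℝ → EuclideanSpace ℝ (Fin 2) := fun s => u j s - u (j - 1) s with hv
  have hv' : HasDerivAt v (du j t - du (j - 1) t) t := (hdu j t).sub (hdu (j - 1) t)
  -- derivative of the squared length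
  have hsq : HasDerivAt (fun s => ⟪v s, v s⟫)
      (⟪v t, du j t - du (j - 1) t⟫ + ⟪du j t - du (j - 1) t, v t⟫) t := hv'.inner ℝ hv'
  have hvt : v t ≠ 0 := by
    intro h
    have h2 : q j t = ‖v t‖ := hq j t
    rw [h, norm_zero] at h2
    exact (hqpos j t).ne' h2
  have hnpos : (0:ℝ) < ‖v t‖ := norm_pos_iff.mpr hvt
  have hvpos : (0:ℝ) < ⟪v t, v t⟫ := by
    rw [real_inner_self_eq_norm_sq]; positivity
  have hsqrt : HasDerivAt Real.sqrt (1 / (2 * Real.sqrt ⟪v t, v t⟫)) ⟪v t, v t⟫ :=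
    Real.hasDerivAt_sqrt hvpos.ne'
  have hcomp := hsqrt.comp t hsq
  have hqeq : (fun s => q j s) = fun s => Real.sqrt ⟪v s, v s⟫ := by
    funext s
    rw [hq, real_inner_self_eq_norm_sq, Real.sqrt_sq (norm_nonneg _)]
  have hqt : Real.sqrt ⟪v t, v t⟫ = q j t := by
    rw [real_inner_self_eq_norm_sq, Real.sqrt_sq (norm_nonneg _), ← hq]
  -- simplify the derivative value
  have hder : HasDerivAt (fun s => q j s)
      (⟪τ j t, du j t - du (j - 1) t⟫) t := by
    rw [hqeq]
    refine hcomp.congr_deriv (Eq.symm ?_)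
    rw [hτ, hqt, real_inner_smul_left,
      real_inner_comm (du j t - du (j - 1) t) (v t)]
    set X := ⟪v t, du j t - du (j - 1) t⟫ with hX
    have hq0 : q j t ≠ 0 := (hqpos j t).ne'
    field_simp
    ring
  convert hder using 1
  -- substitute the ODE
  have hduj : du j t = r j t - (2 / (q j t + q (j + 1) t)) • (τ j t - τ (j + 1) t) := by
    have := hode j t; linear_combination (norm := module) this
  have hduj1 : du (j - 1) t
      = r (j - 1) t - (2 / (q (j - 1) t + q j t)) • (τ (j - 1) t - τ j t) := by
    have := hode (j - 1) t
    rw [sub_add_cancel] at this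
    linear_combination (norm := module) this
  rw [hduj, hduj1]
  set a := τ j t
  set b := τ (j + 1) t
  set c := τ (j - 1) t
  have ha : ‖a‖ = 1 := hτnorm j t
  have hb : ‖b‖ = 1 := hτnorm (j + 1) t
  have hc : ‖c‖ = 1 := hτnorm (j - 1) t
  have hba : ‖b - a‖ ^ 2 = 2 - 2 * ⟪a, b⟫ := by
    rw [norm_sub_sq_real, hb, ha, real_inner_comm]; ring
  have hca : ‖c - a‖ ^ 2 = 2 - 2 * ⟪a, c⟫ := by
    rw [norm_sub_sq_real, hc, ha, real_inner_comm]; ring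
  have haa : ⟪a, a⟫ = 1 := by rw [real_inner_self_eq_norm_sq, ha]; norm_num
  have h1 : (0:ℝ) < q j t + q (j + 1) t := by
    have := hqpos j t; have := hqpos (j + 1) t; linarith
  have h2 : (0:ℝ) < q j t + q (j - 1) t := by
    have := hqpos j t; have := hqpos (j - 1) t; linarith
  rw [show r j t - (2 / (q j t + q (j + 1) t)) • (a - b)
        - (r (j - 1) t - (2 / (q (j - 1) t + q j t)) • (c - a))
      = (r j t - r (j - 1) t) + ((-(2 / (q j t + q (j + 1) t))) • (a - b)
        + (2 / (q (j - 1) t + q j t)) • (c - a)) by module]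
  simp only [inner_add_right, inner_sub_right, real_inner_smul_right, haa, hba, hca]
  have h2' : q (j - 1) t + q j t = q j t + q (j - 1) t := by ring
  rw [h2']
  set X := ⟪a, b⟫
  set Y := ⟪a, c⟫
  set R1 := ⟪a, r j t⟫
  set R2 := ⟪a, r (j - 1) t⟫
  field_simp
  ring
end

section
/- Under the hypotheses of the discrete evolution u̇_j + (2/(q_j+q_{j+1}))(τ_j − τ_{j+1}) = r_j, the derivative of the edge length can also be written q̇_j = τ_j · (r_j − r_{j-1}) − ((q_j+q_{j+1})/4)|u̇_j − r_j|² − ((q_j+q_{j-1})/4)|u̇_{j-1} − r_{j-1}|². -/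
open scoped RealInnerProductSpace

/-- Discrete length-element identity (4.6bis): under the discrete evolution
`u̇_j + (2/(q_j+q_{j+1}))(τ_j - τ_{j+1}) = r_j`, the edge lengths satisfy
`q̇_j = τ_j·(r_j - r_{j-1}) - ((q_j+q_{j+1})/4)|u̇_j - r_j|²
  - ((q_j+q_{j-1})/4)|u̇_{j-1} - r_{j-1}|²`. -/
theorem discrete_length_element_identity_bis (N : ℕ) (hN : 0 < N)
    (u du r : ZMod N → ℝ → EuclideanSpace ℝ (Fin 2))
    (q : ZMod N → ℝ → ℝ) (τ : ZMod N → ℝ → EuclideanSpace ℝ (Fin 2))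
    (hq : ∀ j s, q j s = ‖u j s - u (j - 1) s‖)
    (hτ : ∀ j s, τ j s = (q j s)⁻¹ • (u j s - u (j - 1) s))
    (hqpos : ∀ j s, 0 < q j s)
    (hdu : ∀ j s, HasDerivAt (fun t' => u j t') (du j s) s)
    (hode : ∀ j s, du j s + (2 / (q j s + q (j + 1) s)) • (τ j s - τ (j + 1) s) = r j s)
    (t : ℝ) :
    ∀ j, HasDerivAt (fun t' => q j t')
      (⟪τ j t, r j t - r (j - 1) t⟫
        - (q j t + q (j + 1) t) / 4 * ‖du j t - r j t‖ ^ 2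
        - (q j t + q (j - 1) t) / 4 * ‖du (j - 1) t - r (j - 1) t‖ ^ 2) t := by
  intro j
  -- unit tangents
  have hunit : ∀ k, ⟪τ k t, τ k t⟫ = 1 := by
    intro k
    rw [real_inner_self_eq_norm_sq, hτ, norm_smul, ← hq]
    have := (hqpos k t).ne'
    rw [Real.norm_eq_abs, abs_inv, abs_of_pos (hqpos k t)]
    field_simp
  -- derivative of q j
  have hv : HasDerivAt (fun s => u j s - u (j - 1) s) (du j t - du (j - 1) t) t :=
    (hdu j t).sub (hdu (j - 1) t)
  have hin : HasDerivAt (fun s => ⟪u j s - u (j - 1) s, u j s - u (j - 1) s⟫)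
      (⟪u j t - u (j - 1) t, du j t - du (j - 1) t⟫
        + ⟪du j t - du (j - 1) t, u j t - u (j - 1) t⟫) t := hv.inner ℝ hv
  have hne : ⟪u j t - u (j - 1) t, u j t - u (j - 1) t⟫ ≠ (0 : ℝ) := by
    rw [real_inner_self_eq_norm_sq, ← hq]
    exact pow_ne_zero 2 (hqpos j t).ne'
  have hsq : HasDerivAt (fun s => q j s)
      ((1 / (2 * Real.sqrt ⟪u j t - u (j - 1) t, u j t - u (j - 1) t⟫))
        * (⟪u j t - u (j - 1) t, du j t - du (j - 1) t⟫
          + ⟪du j t - du (j - 1) t, u j t - u (j - 1) t⟫)) t := by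
    have := (Real.hasDerivAt_sqrt hne).comp t hin
    have hf : (fun s => q j s) = Real.sqrt ∘ (fun s => ⟪u j s - u (j - 1) s, u j s - u (j - 1) s⟫) := by
      funext s
      rw [Function.comp_apply, hq]
      exact norm_eq_sqrt_real_inner _
    rw [hf]
    exact this
  have hsqrt : Real.sqrt ⟪u j t - u (j - 1) t, u j t - u (j - 1) t⟫ = q j t := by
    rw [← norm_eq_sqrt_real_inner, hq]
  -- first step derivative value
  have hstep : HasDerivAt (fun s => q j s) (⟪τ j t, du j t - du (j - 1) t⟫) t := by
    convert hsq using 1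
    rw [hsqrt, real_inner_comm (du j t - du (j - 1) t), hτ, real_inner_smul_right,
      real_inner_comm (u j t - u (j - 1) t) (du j t - du (j - 1) t)]
    have := (hqpos j t).ne'
    field_simp
    ring
  convert hstep using 1
  -- now the algebraic identity
  set v := τ j t
  set w := τ (j + 1) t
  set x := τ (j - 1) t
  set Q := q j t + q (j + 1) t with hQdef
  set P := q (j - 1) t + q j t with hPdef
  have hQ : (0 : ℝ) < Q := add_pos (hqpos j t) (hqpos (j + 1) t)
  have hP : (0 : ℝ) < P := add_pos (hqpos (j - 1) t) (hqpos j t)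
  have ha : du j t - r j t = -((2 / Q) • (v - w)) := by
    have := hode j t
    rw [← this]; abel
  have hb : du (j - 1) t - r (j - 1) t = -((2 / P) • (x - v)) := by
    have := hode (j - 1) t
    rw [← this]
    simp only [sub_add_cancel]
    abel
  have hdu_eq : du j t - du (j - 1) t
      = (r j t - r (j - 1) t) + (du j t - r j t) - (du (j - 1) t - r (j - 1) t) := by abel
  have hvv : ⟪v, v⟫ = 1 := hunit j
  have hww : ⟪w, w⟫ = 1 := hunit (j + 1)
  have hxx : ⟪x, x⟫ = 1 := hunit (j - 1)
  have hQcomm : q j t + q (j - 1) t = P := by rw [hPdef]; ring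
  have hna : Q / 4 * ‖du j t - r j t‖ ^ 2 = 2 / Q * (1 - ⟪v, w⟫) := by
    rw [ha, ← real_inner_self_eq_norm_sq]
    simp only [inner_neg_neg, real_inner_smul_left, real_inner_smul_right,
      inner_sub_left, inner_sub_right, hvv, hww, real_inner_comm w v]
    field_simp
    ring
  have hnb : P / 4 * ‖du (j - 1) t - r (j - 1) t‖ ^ 2 = 2 / P * (1 - ⟪v, x⟫) := by
    rw [hb, ← real_inner_self_eq_norm_sq]
    simp only [inner_neg_neg, real_inner_smul_left, real_inner_smul_right,
      inner_sub_left, inner_sub_right, hvv, hxx, real_inner_comm x v]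
    field_simp
    ring
  have hva : ⟪v, du j t - r j t⟫ = -(2 / Q) * (1 - ⟪v, w⟫) := by
    rw [ha]
    simp only [inner_neg_right, real_inner_smul_right, inner_sub_right, hvv]
    ring
  have hvb : ⟪v, du (j - 1) t - r (j - 1) t⟫ = -(2 / P) * (⟪v, x⟫ - 1) := by
    rw [hb]
    simp only [inner_neg_right, real_inner_smul_right, inner_sub_right, hvv]
    ring
  have goalrw : (q j t + q (j - 1) t) / 4 * ‖du (j - 1) t - r (j - 1) t‖ ^ 2
      = P / 4 * ‖du (j - 1) t - r (j - 1) t‖ ^ 2 := by rw [hQcomm]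
  rw [goalrw, hna, hnb, hdu_eq]
  simp only [inner_sub_right, inner_add_right] at hva hvb ⊢
  linear_combination -hva + hvb
end

section
/- With notation as in the previous item (unit vectors τ_{j-1}, τ_j, τ_{j+1}, their rotations ν_k = τ_k^⊥, positive edge lengths q_{j-1}, q_j, q_{j+1}, reals f_{j-1}, f_j and r_k := f_k · (q_k ν_k + q_{k+1} ν_{k+1})/(q_k + q_{k+1})), for every ε > 0: |τ_j · (r_j − r_{j-1})| ≤ (1/(2ε))(q_{j+1} f_j² + q_{j-1} f_{j-1}²) + (ε/2)|τ_{j+1} − τ_j|²/(q_j+q_{j+1}) + (ε/2)|τ_{j-1} − τ_j|²/(q_j+q_{j-1}). -/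
open scoped RealInnerProductSpace

/-- Counter-clockwise rotation by 90 degrees in the plane. -/
noncomputable def perp (v : EuclideanSpace ℝ (Fin 2)) : EuclideanSpace ℝ (Fin 2) :=
  WithLp.toLp 2 ![-v 1, v 0]

lemma perp_sub (a b : EuclideanSpace ℝ (Fin 2)) : perp (a - b) = perp a - perp b := by
  ext i
  fin_cases i <;> simp [perp] <;> ring

lemma norm_perp (v : EuclideanSpace ℝ (Fin 2)) : ‖perp v‖ = ‖v‖ := by
  simp only [EuclideanSpace.norm_eq, perp, PiLp.toLp_apply, Fin.sum_univ_two]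
  norm_num
  ring_nf

lemma inner_perp_self (v : EuclideanSpace ℝ (Fin 2)) : ⟪v, perp v⟫ = 0 := by
  simp only [PiLp.inner_apply, RCLike.inner_apply, conj_trivial, perp, PiLp.toLp_apply, Fin.sum_univ_two]
  norm_num
  ring

lemma abs_inner_perp (v w : EuclideanSpace ℝ (Fin 2)) (hv : ‖v‖ = 1) :
    |⟪v, perp w - perp v⟫| ≤ ‖w - v‖ := by
  calc |⟪v, perp w - perp v⟫| ≤ ‖v‖ * ‖perp w - perp v‖ := abs_real_inner_le_norm _ _
    _ = ‖w - v‖ := by rw [hv, one_mul, ← perp_sub, norm_perp]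

lemma amgm_aux (q1 q2 a b ε : ℝ) (hq1 : 0 < q1) (hq2 : 0 < q2) (hε : 0 < ε)
    (ha : 0 ≤ a) (hb : 0 ≤ b) :
    b * ((q1 + q2)⁻¹ * (q2 * a)) ≤ 1 / (2 * ε) * (q2 * b ^ 2) + ε / 2 * a ^ 2 / (q1 + q2) := by
  rw [← sub_nonneg]
  have hq : (0:ℝ) < q1 + q2 := by linarith
  have e : 1 / (2 * ε) * (q2 * b ^ 2) + ε / 2 * a ^ 2 / (q1 + q2) - b * ((q1 + q2)⁻¹ * (q2 * a))
      = ((ε * a - b * q2) ^ 2 + q1 * q2 * b ^ 2) / (2 * ε * (q1 + q2)) := by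
    field_simp
    ring
  rw [e]; positivity

/-- Estimate (r-r): with `r_k = f_k (q_k ν_k + q_{k+1} ν_{k+1})/(q_k+q_{k+1})`,
`ν_k = τ_k^⊥`, for every `ε > 0`:
`|τ_j·(r_j - r_{j-1})| ≤ (1/(2ε))(q_{j+1} f_j² + q_{j-1} f_{j-1}²)
  + (ε/2)|τ_{j+1}-τ_j|² /(q_j+q_{j+1}) + (ε/2)|τ_{j-1}-τ_j|²/(q_j+q_{j-1})`. -/
theorem tangent_dot_r_difference_estimate
    (τjm τj τjp : EuclideanSpace ℝ (Fin 2))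
    (hτjm : ‖τjm‖ = 1) (hτj : ‖τj‖ = 1) (hτjp : ‖τjp‖ = 1)
    (qjm qj qjp fjm fj ε : ℝ)
    (hqjm : 0 < qjm) (hqj : 0 < qj) (hqjp : 0 < qjp) (hε : 0 < ε) :
    |⟪τj, (fj • ((qj + qjp)⁻¹ • (qj • perp τj + qjp • perp τjp)))
        - (fjm • ((qjm + qj)⁻¹ • (qjm • perp τjm + qj • perp τj)))⟫| ≤
      1 / (2 * ε) * (qjp * fj ^ 2 + qjm * fjm ^ 2)
        + ε / 2 * ‖τjp - τj‖ ^ 2 / (qj + qjp)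
        + ε / 2 * ‖τjm - τj‖ ^ 2 / (qj + qjm) := by
  set A := (⟪τj, perp τjp - perp τj⟫ : ℝ) with hA
  set B := (⟪τj, perp τjm - perp τj⟫ : ℝ) with hB
  have hkey : (⟪τj, (fj • ((qj + qjp)⁻¹ • (qj • perp τj + qjp • perp τjp)))
        - (fjm • ((qjm + qj)⁻¹ • (qjm • perp τjm + qj • perp τj)))⟫ : ℝ)
      = fj * ((qj + qjp)⁻¹ * (qjp * A)) - fjm * ((qjm + qj)⁻¹ * (qjm * B)) := by
    rw [hA, hB]
    simp only [inner_sub_right, real_inner_smul_right, inner_add_right,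
      inner_perp_self]
    ring
  rw [hkey]
  have hAle : |A| ≤ ‖τjp - τj‖ := abs_inner_perp τj τjp hτj
  have hBle : |B| ≤ ‖τjm - τj‖ := abs_inner_perp τj τjm hτj
  have hAa : |A| ≥ 0 := abs_nonneg _
  have hBa : |B| ≥ 0 := abs_nonneg _
  have h1 : |fj * ((qj + qjp)⁻¹ * (qjp * A))|
      ≤ 1 / (2 * ε) * (qjp * fj ^ 2) + ε / 2 * ‖τjp - τj‖ ^ 2 / (qj + qjp) := by
    have hq : 0 < qj + qjp := by linarith
    have habs : |fj * ((qj + qjp)⁻¹ * (qjp * A))| = |fj| * ((qj + qjp)⁻¹ * (qjp * |A|)) := by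
      rw [abs_mul, abs_mul, abs_mul, abs_of_pos (inv_pos.2 hq), abs_of_pos hqjp]
    rw [habs]
    have key : |fj| * ((qj + qjp)⁻¹ * (qjp * |A|))
        ≤ 1 / (2 * ε) * (qjp * fj ^ 2) + ε / 2 * |A| ^ 2 / (qj + qjp) := by
      have := amgm_aux qj qjp |A| |fj| ε hqj hqjp hε (abs_nonneg _) (abs_nonneg _)
      simpa [sq_abs] using this
    refine key.trans ?_
    have hmono : ε / 2 * |A| ^ 2 / (qj + qjp) ≤ ε / 2 * ‖τjp - τj‖ ^ 2 / (qj + qjp) := by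
      gcongr
    linarith
  have h2 : |fjm * ((qjm + qj)⁻¹ * (qjm * B))|
      ≤ 1 / (2 * ε) * (qjm * fjm ^ 2) + ε / 2 * ‖τjm - τj‖ ^ 2 / (qj + qjm) := by
    have hq : 0 < qjm + qj := by linarith
    have habs : |fjm * ((qjm + qj)⁻¹ * (qjm * B))| = |fjm| * ((qjm + qj)⁻¹ * (qjm * |B|)) := by
      rw [abs_mul, abs_mul, abs_mul, abs_of_pos (inv_pos.2 hq), abs_of_pos hqjm]
    rw [habs]
    have key : |fjm| * ((qjm + qj)⁻¹ * (qjm * |B|))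
        ≤ 1 / (2 * ε) * (qjm * fjm ^ 2) + ε / 2 * |B| ^ 2 / (qjm + qj) := by
      have := amgm_aux qj qjm |B| |fjm| ε hqj hqjm hε (abs_nonneg _) (abs_nonneg _)
      simpa [sq_abs, add_comm qj qjm] using this
    refine key.trans ?_
    have hmono : ε / 2 * |B| ^ 2 / (qjm + qj) ≤ ε / 2 * ‖τjm - τj‖ ^ 2 / (qj + qjm) := by
      rw [add_comm qjm qj]
      gcongr
    linarith
  calc |fj * ((qj + qjp)⁻¹ * (qjp * A)) - fjm * ((qjm + qj)⁻¹ * (qjm * B))|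
      ≤ |fj * ((qj + qjp)⁻¹ * (qjp * A))| + |fjm * ((qjm + qj)⁻¹ * (qjm * B))| :=
        abs_sub _ _
    _ ≤ _ := by linarith
end

section
/- Let u_j(t) ∈ ℝ² (indices mod N) evolve by u̇_j + (2/(q_j+q_{j+1}))(τ_j − τ_{j+1}) = r_j with q_j = |u_j − u_{j-1}| > 0, τ_j = (u_j − u_{j-1})/q_j, r_j = f_j ν̄_j where |f_j(t)| ≤ F, and suppose q_j(t) ≤ Ch for all j, t ∈ [0,t̄]. Then for each j, ∫₀^{t̄} (q_j + q_{j+1}) |u̇_j − r_j|² dt ≤ C' h and ∫₀^{t̄} |τ_{j±1} − τ_j|²/(q_j + q_{j±1}) dt ≤ C' h, where C' depends only on F, C, t̄, and the initial data bound. -/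
open scoped RealInnerProductSpace

lemma hasDerivAt_norm_comp {v : ℝ → EuclideanSpace ℝ (Fin 2)}
    {v' : EuclideanSpace ℝ (Fin 2)} {t : ℝ}
    (hv : HasDerivAt v v' t) (h0 : v t ≠ 0) :
    HasDerivAt (fun s => ‖v s‖) (⟪v t, v'⟫ / ‖v t‖) t := by
  have h1 : HasDerivAt (fun s => ⟪v s, v s⟫) (⟪v t, v'⟫ + ⟪v', v t⟫) t := hv.inner ℝ hv
  have h2 : (0:ℝ) < ‖v t‖ := norm_pos_iff.2 h0
  have h3 : ⟪v t, v t⟫ ≠ 0 := by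
    rw [real_inner_self_eq_norm_sq]; positivity
  have h4 := (Real.hasDerivAt_sqrt h3).comp t h1
  have h5 : (Real.sqrt ∘ fun s => ⟪v s, v s⟫) = fun s => ‖v s‖ := by
    funext s
    simp only [Function.comp_apply, real_inner_self_eq_norm_mul_norm,
      Real.sqrt_mul_self (norm_nonneg _)]
  rw [h5] at h4
  refine h4.congr_deriv ?_
  rw [real_inner_self_eq_norm_mul_norm, Real.sqrt_mul_self (norm_nonneg _),
    real_inner_comm v' (v t)]
  field_simp
  ring


lemma sub_le_integral_of_hasDerivAt_le {a b : ℝ} (hab : a ≤ b) {g g' φ : ℝ → ℝ}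
    (hφ : ContinuousOn φ (Set.Icc a b))
    (hg : ∀ t ∈ Set.Icc a b, HasDerivAt g (g' t) t)
    (hle : ∀ t ∈ Set.Icc a b, g' t ≤ φ t) :
    g b - g a ≤ ∫ t in a..b, φ t := by
  set ψ : ℝ → ℝ := fun t => φ (Set.projIcc a b hab t) with hψdef
  have hψc : Continuous ψ := hφ.comp_continuous
      (continuous_subtype_val.comp continuous_projIcc) (fun t => (Set.projIcc a b hab t).2)
  have hψeq : Set.EqOn ψ φ (Set.Icc a b) := fun t ht => by
    simp [hψdef, Set.projIcc_of_mem hab ht]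
  have hΦ : ∀ t : ℝ, HasDerivAt (fun x => ∫ s in a..x, ψ s) (ψ t) t := fun t =>
    intervalIntegral.integral_hasDerivAt_right (hψc.intervalIntegrable _ _)
      (hψc.stronglyMeasurableAtFilter _ _) hψc.continuousAt
  set w : ℝ → ℝ := fun x => (∫ s in a..x, ψ s) - g x with hw
  have hwd : ∀ t ∈ Set.Icc a b, HasDerivAt w (ψ t - g' t) t := fun t ht => (hΦ t).sub (hg t ht)
  have hmono : MonotoneOn w (Set.Icc a b) := by
    apply monotoneOn_of_deriv_nonneg (convex_Icc a b)
    · exact fun t ht => ((hwd t ht).continuousAt).continuousWithinAt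
    · intro t ht
      exact ((hwd t (interior_subset ht)).differentiableAt).differentiableWithinAt
    · intro t ht
      have ht' := interior_subset ht
      rw [(hwd t ht').deriv, hψeq ht']
      linarith [hle t ht']
  have h1 := hmono (Set.left_mem_Icc.2 hab) (Set.right_mem_Icc.2 hab) hab
  have h2 : (∫ s in a..b, ψ s) = ∫ t in a..b, φ t :=
    intervalIntegral.integral_congr (by rwa [Set.uIcc_of_le hab])
  simp only [hw, intervalIntegral.integral_same] at h1
  linarith

lemma young_aux' {s x F : ℝ} (hs : 0 < s) :
    F * x ≤ F^2 * s / 2 + x^2 / s / 2 := by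
  have h2 : F^2*s/2 + x^2/s/2 - F*x = (F*s - x)^2/(2*s) := by
    field_simp
    ring
  nlinarith [sq_nonneg (F*s - x), div_nonneg (sq_nonneg (F*s-x)) (by linarith : (0:ℝ) ≤ 2*s)]


set_option maxHeartbeats 1000000 in
/-- Estimate (4.9): for the discrete evolution
`u̇_j + (2/(q_j+q_{j+1}))(τ_j - τ_{j+1}) = r_j` with `r_j = f_j ν̄_j`, `|f_j| ≤ F`
and `q_j ≤ C h` on `[0,t̄]`, one has
`∫₀^{t̄} (q_j+q_{j+1})|u̇_j - r_j|² dt ≤ C' h` and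
`∫₀^{t̄} |τ_{j±1}-τ_j|²/(q_j+q_{j±1}) dt ≤ C' h`, with `C'` depending only on
`F`, `C`, `t̄`. -/
theorem discrete_velocity_integral_bounds (F C tbar : ℝ)
    (hF : 0 ≤ F) (hC : 0 < C) (htbar : 0 ≤ tbar) :
    ∃ C' > 0, ∀ (N : ℕ), 0 < N →
      ∀ (h : ℝ) (u du : ZMod N → ℝ → EuclideanSpace ℝ (Fin 2))
        (f : ZMod N → ℝ → ℝ) (q : ZMod N → ℝ → ℝ)
        (τ nubar r : ZMod N → ℝ → EuclideanSpace ℝ (Fin 2)),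
      0 < h →
      (∀ j t, q j t = ‖u j t - u (j - 1) t‖) →
      (∀ j t, τ j t = (q j t)⁻¹ • (u j t - u (j - 1) t)) →
      (∀ j t, nubar j t = (q j t + q (j + 1) t)⁻¹ •
          (q j t • perp (τ j t) + q (j + 1) t • perp (τ (j + 1) t))) →
      (∀ j t, r j t = f j t • nubar j t) →
      (∀ (j : ZMod N), ∀ t ∈ Set.Icc 0 tbar, 0 < q j t) →
      (∀ (j : ZMod N), ∀ t ∈ Set.Icc 0 tbar, HasDerivAt (fun t' => u j t') (du j t) t) →
      (∀ (j : ZMod N), ∀ t ∈ Set.Icc 0 tbar,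
        du j t + (2 / (q j t + q (j + 1) t)) • (τ j t - τ (j + 1) t) = r j t) →
      (∀ (j : ZMod N), ∀ t ∈ Set.Icc 0 tbar, |f j t| ≤ F) →
      (∀ (j : ZMod N), ∀ t ∈ Set.Icc 0 tbar, q j t ≤ C * h) →
      ∀ j : ZMod N,
        (∫ t in (0:ℝ)..tbar, (q j t + q (j + 1) t) * ‖du j t - r j t‖ ^ 2) ≤ C' * h ∧
        (∫ t in (0:ℝ)..tbar, ‖τ (j + 1) t - τ j t‖ ^ 2 / (q j t + q (j + 1) t)) ≤ C' * h ∧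
        (∫ t in (0:ℝ)..tbar, ‖τ (j - 1) t - τ j t‖ ^ 2 / (q j t + q (j - 1) t)) ≤ C' * h := by
  refine ⟨16*F^2*C*tbar + 8*C + 1, by positivity, ?_⟩
  intro N hN h u du f q τ nubar r hh hq hτ hnubar hr hqpos hdu heq hf hqle j
  have htmem : tbar ∈ Set.Icc (0:ℝ) tbar := Set.right_mem_Icc.2 htbar
  have h0mem : (0:ℝ) ∈ Set.Icc (0:ℝ) tbar := Set.left_mem_Icc.2 htbar
  have hJ : j - 1 + 1 = j := by ring
  -- continuity facts
  have hucont : ∀ i : ZMod N, ContinuousOn (u i) (Set.Icc 0 tbar) :=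
    fun i t ht => ((hdu i t ht).continuousAt).continuousWithinAt
  have hqcont : ∀ i : ZMod N, ContinuousOn (q i) (Set.Icc 0 tbar) := fun i =>
    (((hucont i).sub (hucont (i-1))).norm).congr fun t _ => hq i t
  have hqne : ∀ i : ZMod N, ∀ t ∈ Set.Icc (0:ℝ) tbar, q i t ≠ 0 :=
    fun i t ht => (hqpos i t ht).ne'
  have hτcont : ∀ i : ZMod N, ContinuousOn (τ i) (Set.Icc 0 tbar) := fun i =>
    (((hqcont i).inv₀ (hqne i)).smul ((hucont i).sub (hucont (i-1)))).congr fun t _ => hτ i t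
  have hτunit : ∀ i : ZMod N, ∀ t ∈ Set.Icc (0:ℝ) tbar, ‖τ i t‖ = 1 := by
    intro i t ht
    rw [hτ i t, norm_smul, Real.norm_eq_abs, abs_inv, abs_of_pos (hqpos i t ht), ← hq i t]
    exact inv_mul_cancel₀ (hqne i t ht)
  have hs1pos : ∀ t ∈ Set.Icc (0:ℝ) tbar, 0 < q j t + q (j+1) t :=
    fun t ht => add_pos (hqpos j t ht) (hqpos (j+1) t ht)
  have hs2pos : ∀ t ∈ Set.Icc (0:ℝ) tbar, 0 < q j t + q (j-1) t :=
    fun t ht => add_pos (hqpos j t ht) (hqpos (j-1) t ht)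
  -- the comparison function
  set φ : ℝ → ℝ := fun t =>
      F^2 * ((q j t + q (j+1) t) + (q j t + q (j-1) t)) / 2 -
      (‖τ (j+1) t - τ j t‖^2 / (q j t + q (j+1) t) +
       ‖τ (j-1) t - τ j t‖^2 / (q j t + q (j-1) t)) / 2 with hφdef
  have hb1cont : ContinuousOn (fun t => ‖τ (j+1) t - τ j t‖^2 / (q j t + q (j+1) t))
      (Set.Icc 0 tbar) :=
    ((((hτcont (j+1)).sub (hτcont j)).norm.pow 2).div ((hqcont j).add (hqcont (j+1)))
      (fun t ht => (hs1pos t ht).ne'))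
  have hb2cont : ContinuousOn (fun t => ‖τ (j-1) t - τ j t‖^2 / (q j t + q (j-1) t))
      (Set.Icc 0 tbar) :=
    ((((hτcont (j-1)).sub (hτcont j)).norm.pow 2).div ((hqcont j).add (hqcont (j-1)))
      (fun t ht => (hs2pos t ht).ne'))
  have hGcont : ContinuousOn (fun t => F^2 * ((q j t + q (j+1) t) + (q j t + q (j-1) t)) / 2)
      (Set.Icc 0 tbar) :=
    (continuousOn_const.mul (((hqcont j).add (hqcont (j+1))).add
      ((hqcont j).add (hqcont (j-1))))).div_const 2
  have hφcont : ContinuousOn φ (Set.Icc 0 tbar) :=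
    hGcont.sub ((hb1cont.add hb2cont).div_const 2)
  -- derivative of q j
  have hqd : ∀ t ∈ Set.Icc (0:ℝ) tbar,
      HasDerivAt (q j) (⟪τ j t, du j t - du (j-1) t⟫) t := by
    intro t ht
    have hv : HasDerivAt (fun s => u j s - u (j-1) s) (du j t - du (j-1) t) t :=
      (hdu j t ht).sub (hdu (j-1) t ht)
    have h0 : u j t - u (j-1) t ≠ 0 := by
      intro hz
      exact hqne j t ht (by rw [hq j t, hz, norm_zero])
    have hd := hasDerivAt_norm_comp hv h0
    have hfun : (fun s => ‖u j s - u (j-1) s‖) = q j := funext fun s => (hq j s).symm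
    rw [hfun] at hd
    convert hd using 1
    rw [hτ j t, real_inner_smul_left, hq j t]
    field_simp
  -- the key differential inequality
  have hqd_le : ∀ t ∈ Set.Icc (0:ℝ) tbar, ⟪τ j t, du j t - du (j-1) t⟫ ≤ φ t := by
    intro t ht
    have hcomm : q (j-1) t + q j t = q j t + q (j-1) t := add_comm _ _
    have hdu_j : du j t = r j t - (2 / (q j t + q (j+1) t)) • (τ j t - τ (j+1) t) :=
      eq_sub_of_add_eq (heq j t ht)
    have hdu_j1 : du (j-1) t = r (j-1) t - (2 / (q j t + q (j-1) t)) • (τ (j-1) t - τ j t) := by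
      have h2 := heq (j-1) t ht
      rw [hJ, hcomm] at h2
      exact eq_sub_of_add_eq h2
    have hx : ⟪τ j t, du j t - du (j-1) t⟫ =
        ⟪τ j t, r j t⟫ - ⟪τ j t, r (j-1) t⟫
        - (2 / (q j t + q (j+1) t)) * ⟪τ j t, τ j t - τ (j+1) t⟫
        + (2 / (q j t + q (j-1) t)) * ⟪τ j t, τ (j-1) t - τ j t⟫ := by
      rw [hdu_j, hdu_j1]
      simp only [inner_sub_right, real_inner_smul_right]
      ring
    have hself : ⟪τ j t, τ j t⟫ = 1 := by
      rw [real_inner_self_eq_norm_sq, hτunit j t ht]; norm_num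
    have hI1 : ⟪τ j t, τ j t - τ (j+1) t⟫ = ‖τ (j+1) t - τ j t‖^2 / 2 := by
      have e1 := norm_sub_sq_real (τ (j+1) t) (τ j t)
      rw [hτunit (j+1) t ht, hτunit j t ht] at e1
      simp only [one_pow] at e1
      rw [inner_sub_right, hself, real_inner_comm]
      linarith
    have hI2 : ⟪τ j t, τ (j-1) t - τ j t⟫ = -(‖τ (j-1) t - τ j t‖^2 / 2) := by
      have e2 := norm_sub_sq_real (τ (j-1) t) (τ j t)
      rw [hτunit (j-1) t ht, hτunit j t ht] at e2
      simp only [one_pow] at e2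
      rw [inner_sub_right, hself, real_inner_comm]
      linarith
    -- bound on the forcing terms
    have hA1 : |⟪τ j t, r j t⟫| ≤ F * ‖τ (j+1) t - τ j t‖ := by
      have hval : ⟪τ j t, r j t⟫ = f j t * ((q j t + q (j+1) t)⁻¹ *
          (q (j+1) t * ⟪τ j t - τ (j+1) t, perp (τ (j+1) t)⟫)) := by
        rw [hr j t, real_inner_smul_right, hnubar j t, real_inner_smul_right, inner_add_right,
          real_inner_smul_right, real_inner_smul_right, inner_perp_self, mul_zero, zero_add,
          inner_sub_left, inner_perp_self, sub_zero]
      have hcs : |⟪τ j t - τ (j+1) t, perp (τ (j+1) t)⟫| ≤ ‖τ (j+1) t - τ j t‖ := by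
        calc |⟪τ j t - τ (j+1) t, perp (τ (j+1) t)⟫|
            ≤ ‖τ j t - τ (j+1) t‖ * ‖perp (τ (j+1) t)‖ := abs_real_inner_le_norm _ _
          _ = ‖τ (j+1) t - τ j t‖ := by
              rw [norm_perp, hτunit (j+1) t ht, mul_one, norm_sub_rev]
      have hfrac : (q j t + q (j+1) t)⁻¹ * q (j+1) t ≤ 1 := by
        rw [inv_mul_eq_div]
        exact (div_le_one (hs1pos t ht)).2 (by linarith [hqpos j t ht])
      rw [hval, abs_mul, abs_mul, abs_mul,
        abs_of_pos (inv_pos.2 (hs1pos t ht)), abs_of_pos (hqpos (j+1) t ht)]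
      calc |f j t| * ((q j t + q (j+1) t)⁻¹ *
              (q (j+1) t * |⟪τ j t - τ (j+1) t, perp (τ (j+1) t)⟫|))
          ≤ F * ((q j t + q (j+1) t)⁻¹ *
              (q (j+1) t * |⟪τ j t - τ (j+1) t, perp (τ (j+1) t)⟫|)) := by
            apply mul_le_mul_of_nonneg_right (hf j t ht)
            exact mul_nonneg (inv_pos.2 (hs1pos t ht)).le
              (mul_nonneg (hqpos (j+1) t ht).le (abs_nonneg _))
        _ = F * (((q j t + q (j+1) t)⁻¹ * q (j+1) t) *
              |⟪τ j t - τ (j+1) t, perp (τ (j+1) t)⟫|) := by ring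
        _ ≤ F * (1 * |⟪τ j t - τ (j+1) t, perp (τ (j+1) t)⟫|) := by
            apply mul_le_mul_of_nonneg_left _ hF
            exact mul_le_mul_of_nonneg_right hfrac (abs_nonneg _)
        _ = F * |⟪τ j t - τ (j+1) t, perp (τ (j+1) t)⟫| := by ring
        _ ≤ F * ‖τ (j+1) t - τ j t‖ := mul_le_mul_of_nonneg_left hcs hF
    have hA2 : |⟪τ j t, r (j-1) t⟫| ≤ F * ‖τ (j-1) t - τ j t‖ := by
      have hval : ⟪τ j t, r (j-1) t⟫ = f (j-1) t * ((q (j-1) t + q j t)⁻¹ *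
          (q (j-1) t * ⟪τ j t - τ (j-1) t, perp (τ (j-1) t)⟫)) := by
        have hnb := hnubar (j-1) t
        rw [hJ] at hnb
        rw [hr (j-1) t, real_inner_smul_right, hnb, real_inner_smul_right, inner_add_right,
          real_inner_smul_right, real_inner_smul_right, inner_perp_self, mul_zero, add_zero,
          inner_sub_left, inner_perp_self, sub_zero]
      have hcs : |⟪τ j t - τ (j-1) t, perp (τ (j-1) t)⟫| ≤ ‖τ (j-1) t - τ j t‖ := by
        calc |⟪τ j t - τ (j-1) t, perp (τ (j-1) t)⟫|
            ≤ ‖τ j t - τ (j-1) t‖ * ‖perp (τ (j-1) t)‖ := abs_real_inner_le_norm _ _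
          _ = ‖τ (j-1) t - τ j t‖ := by
              rw [norm_perp, hτunit (j-1) t ht, mul_one, norm_sub_rev]
      have hs2pos' : 0 < q (j-1) t + q j t := by
        rw [hcomm]; exact hs2pos t ht
      have hfrac : (q (j-1) t + q j t)⁻¹ * q (j-1) t ≤ 1 := by
        rw [inv_mul_eq_div]
        exact (div_le_one hs2pos').2 (by linarith [hqpos j t ht])
      rw [hval, abs_mul, abs_mul, abs_mul,
        abs_of_pos (inv_pos.2 hs2pos'), abs_of_pos (hqpos (j-1) t ht)]
      calc |f (j-1) t| * ((q (j-1) t + q j t)⁻¹ *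
              (q (j-1) t * |⟪τ j t - τ (j-1) t, perp (τ (j-1) t)⟫|))
          ≤ F * ((q (j-1) t + q j t)⁻¹ *
              (q (j-1) t * |⟪τ j t - τ (j-1) t, perp (τ (j-1) t)⟫|)) := by
            apply mul_le_mul_of_nonneg_right (hf (j-1) t ht)
            exact mul_nonneg (inv_pos.2 hs2pos').le
              (mul_nonneg (hqpos (j-1) t ht).le (abs_nonneg _))
        _ = F * (((q (j-1) t + q j t)⁻¹ * q (j-1) t) *
              |⟪τ j t - τ (j-1) t, perp (τ (j-1) t)⟫|) := by ring
        _ ≤ F * (1 * |⟪τ j t - τ (j-1) t, perp (τ (j-1) t)⟫|) := by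
            apply mul_le_mul_of_nonneg_left _ hF
            exact mul_le_mul_of_nonneg_right hfrac (abs_nonneg _)
        _ = F * |⟪τ j t - τ (j-1) t, perp (τ (j-1) t)⟫| := by ring
        _ ≤ F * ‖τ (j-1) t - τ j t‖ := mul_le_mul_of_nonneg_left hcs hF
    have hy1 := young_aux' (x := ‖τ (j+1) t - τ j t‖) (F := F) (hs1pos t ht)
    have hy2 := young_aux' (x := ‖τ (j-1) t - τ j t‖) (F := F) (hs2pos t ht)
    have hb1 := le_abs_self (⟪τ j t, r j t⟫)
    have hb2 := neg_abs_le (⟪τ j t, r (j-1) t⟫)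
    rw [hx, hI1, hI2, hφdef]
    have e3 : (2 / (q j t + q (j+1) t)) * (‖τ (j+1) t - τ j t‖^2 / 2)
        = ‖τ (j+1) t - τ j t‖^2 / (q j t + q (j+1) t) := by ring
    have e4 : (2 / (q j t + q (j-1) t)) * (-(‖τ (j-1) t - τ j t‖^2 / 2))
        = -(‖τ (j-1) t - τ j t‖^2 / (q j t + q (j-1) t)) := by ring
    linarith [hA1, hA2, hy1, hy2, hb1, hb2]
  -- integrate the inequality
  have hkey := sub_le_integral_of_hasDerivAt_le htbar hφcont hqd hqd_le
  have huIcc : Set.uIcc (0:ℝ) tbar = Set.Icc 0 tbar := Set.uIcc_of_le htbar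
  have hIb1 : IntervalIntegrable (fun t => ‖τ (j+1) t - τ j t‖^2 / (q j t + q (j+1) t))
      MeasureTheory.volume 0 tbar := (huIcc ▸ hb1cont).intervalIntegrable
  have hIb2 : IntervalIntegrable (fun t => ‖τ (j-1) t - τ j t‖^2 / (q j t + q (j-1) t))
      MeasureTheory.volume 0 tbar := (huIcc ▸ hb2cont).intervalIntegrable
  have hIG : IntervalIntegrable (fun t => F^2 * ((q j t + q (j+1) t) + (q j t + q (j-1) t)) / 2)
      MeasureTheory.volume 0 tbar := (huIcc ▸ hGcont).intervalIntegrable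
  have hsplit : (∫ t in (0:ℝ)..tbar, φ t) =
      (∫ t in (0:ℝ)..tbar, F^2 * ((q j t + q (j+1) t) + (q j t + q (j-1) t)) / 2) -
      ((∫ t in (0:ℝ)..tbar, ‖τ (j+1) t - τ j t‖^2 / (q j t + q (j+1) t)) +
       (∫ t in (0:ℝ)..tbar, ‖τ (j-1) t - τ j t‖^2 / (q j t + q (j-1) t))) / 2 := by
    rw [hφdef, intervalIntegral.integral_sub hIG ((hIb1.add hIb2).div_const 2)]
    congr 1
    rw [intervalIntegral.integral_div, intervalIntegral.integral_add hIb1 hIb2]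
  have hGle : (∫ t in (0:ℝ)..tbar, F^2 * ((q j t + q (j+1) t) + (q j t + q (j-1) t)) / 2)
      ≤ 2 * F^2 * C * h * tbar := by
    have hmono := intervalIntegral.integral_mono_on (μ := MeasureTheory.volume) htbar hIG
      (intervalIntegrable_const (c := 2 * F^2 * C * h))
      (fun t ht => by
        have h1 := hqle j t ht
        have h2 := hqle (j+1) t ht
        have h3 := hqle (j-1) t ht
        nlinarith [sq_nonneg F])
    rw [intervalIntegral.integral_const] at hmono
    calc _ ≤ (tbar - 0) • (2 * F^2 * C * h) := hmono
      _ = 2 * F^2 * C * h * tbar := by rw [smul_eq_mul]; ring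
  have hb1nn : 0 ≤ ∫ t in (0:ℝ)..tbar, ‖τ (j+1) t - τ j t‖^2 / (q j t + q (j+1) t) :=
    intervalIntegral.integral_nonneg htbar
      (fun t ht => div_nonneg (sq_nonneg _) (hs1pos t ht).le)
  have hb2nn : 0 ≤ ∫ t in (0:ℝ)..tbar, ‖τ (j-1) t - τ j t‖^2 / (q j t + q (j-1) t) :=
    intervalIntegral.integral_nonneg htbar
      (fun t ht => div_nonneg (sq_nonneg _) (hs2pos t ht).le)
  have hq0 : q j 0 ≤ C * h := hqle j 0 h0mem
  have hqt : 0 < q j tbar := hqpos j tbar htmem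
  rw [hsplit] at hkey
  -- hkey : q j tbar - q j 0 ≤ ∫G - (I1 + I2)/2
  have hKb1 : (∫ t in (0:ℝ)..tbar, ‖τ (j+1) t - τ j t‖^2 / (q j t + q (j+1) t))
      ≤ 4 * F^2 * C * h * tbar + 2 * C * h := by linarith
  have hKb2 : (∫ t in (0:ℝ)..tbar, ‖τ (j-1) t - τ j t‖^2 / (q j t + q (j-1) t))
      ≤ 4 * F^2 * C * h * tbar + 2 * C * h := by linarith
  have hFCth : 0 ≤ F^2 * C * tbar * h :=
    mul_nonneg (mul_nonneg (mul_nonneg (sq_nonneg F) hC.le) htbar) hh.le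
  have hCh : 0 < C * h := mul_pos hC hh
  refine ⟨?_, by nlinarith, by nlinarith⟩
  -- first integral: rewrite the integrand
  have heqint : Set.EqOn (fun t => (q j t + q (j+1) t) * ‖du j t - r j t‖^2)
      (fun t => 4 * (‖τ (j+1) t - τ j t‖^2 / (q j t + q (j+1) t))) (Set.uIcc 0 tbar) := by
    intro t ht
    rw [huIcc] at ht
    have hd : du j t - r j t = -((2 / (q j t + q (j+1) t)) • (τ j t - τ (j+1) t)) := by
      rw [← heq j t ht]; abel
    have hsne : q j t + q (j+1) t ≠ 0 := (hs1pos t ht).ne'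
    simp only
    rw [hd, norm_neg, norm_smul, Real.norm_eq_abs,
      abs_of_pos (div_pos two_pos (hs1pos t ht)), norm_sub_rev, mul_pow]
    field_simp
    ring
  rw [intervalIntegral.integral_congr heqint, intervalIntegral.integral_const_mul]
  nlinarith
end
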